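/- Let 𝔐 = (V,⟨·,·⟩,A) be Jacobi–Tsankov. Then for all x, y ∈ V one has J(x)∘J(x,y) = 0, J(x,y)∘J(x) = 0, and J(x,y)∘J(x,y) = −(1/2)·J(x)∘J(y). -/
import Mathlib


noncomputable section

/-- The Jacobi operator `J(x) : y ↦ 𝒜(y,x)x` of a (tri)linear curvature operator `𝒜`. -/
def jacobiOp {V : Type*} [AddCommGroup V] [Module ℝ V]
    (Aop : V →ₗ[ℝ] V →ₗ[ℝ] V →ₗ[ℝ] V) (x : V) : V →ₗ[ℝ] V where
  toFun y := Aop y x x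
  map_add' y z := by simp
  map_smul' c y := by simp

/-- The polarized Jacobi operator `J(x,y) : z ↦ ½(𝒜(z,x)y + 𝒜(z,y)x)`. -/
def jacobiPol {V : Type*} [AddCommGroup V] [Module ℝ V]
    (Aop : V →ₗ[ℝ] V →ₗ[ℝ] V →ₗ[ℝ] V) (x y : V) : V →ₗ[ℝ] V where
  toFun z := (1/2 : ℝ) • (Aop z x y + Aop z y x)
  map_add' a b := by simp [smul_add]; abel
  map_smul' c a := by simp [smul_add, smul_comm c]

/-- If `𝔐 = (V,⟨·,·⟩,A)` is Jacobi–Tsankov, then for all `x, y ∈ V` one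
has `J(x)∘J(x,y) = 0`, `J(x,y)∘J(x) = 0`, and `J(x,y)∘J(x,y) = -(1/2)·J(x)∘J(y)`. -/
theorem jacobiTsankov_polarized_relations
    {V : Type*} [AddCommGroup V] [Module ℝ V] [FiniteDimensional ℝ V]
    -- a nondegenerate symmetric bilinear form ⟨·,·⟩ on V
    (B : LinearMap.BilinForm ℝ V)
    (hBsymm : ∀ x y : V, B x y = B y x)
    (hBnd : ∀ x : V, (∀ y : V, B x y = 0) → x = 0)
    -- the curvature operator 𝒜, with `A x y z w = ⟨𝒜(x,y)z, w⟩`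
    (Aop : V →ₗ[ℝ] V →ₗ[ℝ] V →ₗ[ℝ] V)
    -- A(x,y,z,w) = -A(y,x,z,w)
    (hA1 : ∀ x y z w : V, B (Aop x y z) w = - B (Aop y x z) w)
    -- A(x,y,z,w) = A(z,w,x,y)
    (hA2 : ∀ x y z w : V, B (Aop x y z) w = B (Aop z w x) y)
    -- first Bianchi identity
    (hA3 : ∀ x y z w : V, B (Aop x y z) w + B (Aop y z x) w + B (Aop z x y) w = 0)
    -- 𝔐 is Jacobi–Tsankov
    (hJT : ∀ x y : V, jacobiOp Aop x ∘ₗ jacobiOp Aop y = jacobiOp Aop y ∘ₗ jacobiOp Aop x) :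
    ∀ x y : V,
      jacobiOp Aop x ∘ₗ jacobiPol Aop x y = 0 ∧
      jacobiPol Aop x y ∘ₗ jacobiOp Aop x = 0 ∧
      jacobiPol Aop x y ∘ₗ jacobiPol Aop x y = -(1/2 : ℝ) • (jacobiOp Aop x ∘ₗ jacobiOp Aop y) := by
  -- pointwise formulas
  have hJapp : ∀ (a w : V), jacobiOp Aop a w = Aop w a a := fun _ _ => rfl
  have hPapp : ∀ (a b w : V), jacobiPol Aop a b w = (1/2:ℝ) • (Aop w a b + Aop w b a) :=
    fun _ _ _ => rfl
  -- pointwise Jacobi–Tsankov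
  have hJTp : ∀ a b z : V, Aop (Aop z b b) a a = Aop (Aop z a a) b b := by
    intro a b z
    have h := DFunLike.congr_fun (hJT a b) z
    simpa [LinearMap.comp_apply, hJapp] using h
  -- skew symmetry in first two slots
  have hskew : ∀ u v w : V, Aop u v w = - Aop v u w := by
    intro u v w
    have h0 : ∀ t : V, B (Aop u v w + Aop v u w) t = 0 := by
      intro t
      rw [map_add, LinearMap.add_apply, hA1 u v w t]
      ring
    exact eq_neg_of_add_eq_zero_left (hBnd _ h0)
  have hxx : ∀ u w : V, Aop u u w = 0 := by
    intro u w
    have h2 : (2:ℝ) • Aop u u w = 0 := by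
      rw [two_smul]
      nth_rewrite 2 [hskew u u w]
      simp
    rcases smul_eq_zero.mp h2 with h3 | h3
    · norm_num at h3
    · exact h3
  -- expansion of J(u + c•v)
  have hform : ∀ (c : ℝ) (u v w : V),
      Aop w (u + c • v) (u + c • v)
        = Aop w u u + c • (Aop w u v + Aop w v u) + (c*c) • Aop w v v := by
    intro c u v w
    simp only [map_add, map_smul, LinearMap.add_apply, LinearMap.smul_apply]
    module
  -- J(u) commutes with the (unhalved) polarization P(u,v)
  have hcP : ∀ u v z : V,
      Aop (Aop z u v) u u + Aop (Aop z v u) u u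
        = Aop (Aop z u u) u v + Aop (Aop z u u) v u := by
    intro u v z
    have h := hJTp u (u + (1:ℝ) • v) z
    simp only [hform] at h
    simp only [map_add, map_smul, LinearMap.add_apply, LinearMap.smul_apply, one_smul,
      one_mul] at h
    have h2 := hJTp u v z
    linear_combination (norm := module) h - h2
  -- J(u)² = 0
  have hsq : ∀ u w : V, Aop (Aop w u u) u u = 0 := by
    intro u w
    have h := hcP u w u
    rw [hxx u w, hxx u u, hskew u w u] at h
    simp only [map_zero, LinearMap.zero_apply, map_neg, LinearMap.neg_apply, zero_add,
      add_zero, neg_eq_zero] at h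
    exact h
  -- a small linear-algebra solver
  have solve : ∀ q r s : V, (∀ c : ℝ, c • q + (c*c) • r + (c*c*c) • s = 0) →
      q = 0 ∧ r = 0 ∧ s = 0 := by
    intro q r s h
    have hr2 : (2:ℝ) • r = 0 := by
      linear_combination (norm := module) h 1 + h (-1)
    have hr : r = 0 := by
      rcases smul_eq_zero.mp hr2 with h3 | h3
      · norm_num at h3
      · exact h3
    have hs6 : (6:ℝ) • s = 0 := by
      linear_combination (norm := module) h 2 - (2:ℝ) • h 1 - hr2
    have hs : s = 0 := by
      rcases smul_eq_zero.mp hs6 with h3 | h3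
      · norm_num at h3
      · exact h3
    have hq : q = 0 := by
      linear_combination (norm := module) h 1 - hr - hs
    exact ⟨hq, hr, hs⟩
  intro x y
  -- the polynomial identity obtained by expanding J(x + c•y)² = 0
  have hkey : ∀ z : V,
      (Aop (Aop z x y) x x + Aop (Aop z y x) x x
        + (Aop (Aop z x x) x y + Aop (Aop z x x) y x) = 0) ∧
      (Aop (Aop z y y) x x
        + (Aop (Aop z x y) x y + Aop (Aop z y x) x y
          + (Aop (Aop z x y) y x + Aop (Aop z y x) y x))
        + Aop (Aop z x x) y y = 0) ∧
      (Aop (Aop z y y) x y + Aop (Aop z y y) y x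
        + (Aop (Aop z x y) y y + Aop (Aop z y x) y y) = 0) := by
    intro z
    have hpoly : ∀ c : ℝ,
        c • (Aop (Aop z x y) x x + Aop (Aop z y x) x x
          + (Aop (Aop z x x) x y + Aop (Aop z x x) y x))
        + (c*c) • (Aop (Aop z y y) x x
          + (Aop (Aop z x y) x y + Aop (Aop z y x) x y
            + (Aop (Aop z x y) y x + Aop (Aop z y x) y x))
          + Aop (Aop z x x) y y)
        + (c*c*c) • (Aop (Aop z y y) x y + Aop (Aop z y y) y x
          + (Aop (Aop z x y) y y + Aop (Aop z y x) y y)) = 0 := by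
      intro c
      have h := hsq (x + c • y) z
      simp only [hform] at h
      simp only [map_add, map_smul, LinearMap.add_apply, LinearMap.smul_apply] at h
      linear_combination (norm := module)
        h - hsq x z - ((c*c)*(c*c)) • hsq y z
    exact solve _ _ _ hpoly
  refine ⟨?_, ?_, ?_⟩
  · ext z
    obtain ⟨hQ, hR, hS⟩ := hkey z
    have hc := hcP x y z
    simp only [LinearMap.comp_apply, LinearMap.zero_apply, hPapp, hJapp, map_smul, map_add,
      LinearMap.add_apply, LinearMap.smul_apply]
    linear_combination (norm := module) ((1/4:ℝ)) • hQ + ((1/4:ℝ)) • hc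
  · ext z
    obtain ⟨hQ, hR, hS⟩ := hkey z
    have hc := hcP x y z
    simp only [LinearMap.comp_apply, LinearMap.zero_apply, hPapp, hJapp, map_smul, map_add,
      LinearMap.add_apply, LinearMap.smul_apply]
    linear_combination (norm := module) ((1/4:ℝ)) • hQ - ((1/4:ℝ)) • hc
  · ext z
    obtain ⟨hQ, hR, hS⟩ := hkey z
    have hc := hJTp x y z
    simp only [LinearMap.comp_apply, LinearMap.neg_apply, LinearMap.smul_apply, hPapp, hJapp,
      map_smul, map_add, LinearMap.add_apply]
    linear_combination (norm := module) ((1/4:ℝ)) • hR + ((1/4:ℝ)) • hc
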